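/- For an m-homogeneous polynomial P on ℂⁿ and 1 ≤ k ≤ m, one has S_{k−1} L_P = 𝔄^k ⊙ S_k L_P, i.e. for every index i, c_i(S_{k−1} L_P) = c_i(𝔄^k) · c_i(S_k L_P), where c_i(𝔄^k) = k/|{1 ≤ u ≤ k : i_u = i_k}| when max{i₁,...,i_{k−1}} ≤ i_k and c_i(𝔄^k) = 0 otherwise. -/

import Mathlib

/-- The (non-symmetric) `m`-form associated to a coefficient array `c`
(supported on nondecreasing multi-indices). -/
noncomputable def LP (n m : ℕ) (c : (Fin m → Fin n) → ℂ) : (Fin m → (Fin n → ℂ)) → ℂ :=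
  fun x => ∑ j : Fin m → Fin n, c j * ∏ k : Fin m, x k (j k)

/-- Partial symmetrization over the first `k` arguments. -/
noncomputable def partialSym (n m k : ℕ) (L : (Fin m → (Fin n → ℂ)) → ℂ) :
    (Fin m → (Fin n → ℂ)) → ℂ :=
  fun x => (Nat.factorial k : ℂ)⁻¹ *
    ∑ σ ∈ Finset.univ.filter
        (fun σ : Equiv.Perm (Fin m) => ∀ i : Fin m, k ≤ (i : ℕ) → σ i = i),
      L (fun u => x (σ u))

/-- The coefficient `c_i(L) = L(e_{i₁},…,e_{i_m})` of an `m`-form. -/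
noncomputable def coeff (n m : ℕ) (L : (Fin m → (Fin n → ℂ)) → ℂ) (i : Fin m → Fin n) : ℂ :=
  L (fun k => Pi.single (i k) 1)

/-- The matrix `𝔄^k`:
`c_i(𝔄^k) = k/|{1 ≤ u ≤ k : i_u = i_k}|` if `max{i₁,…,i_{k−1}} ≤ i_k`, else `0`. -/
noncomputable def Afrak (n m k : ℕ) (hk : 1 ≤ k) (hkm : k ≤ m) : (Fin m → Fin n) → ℂ :=
  fun i =>
    if ∀ u : Fin m, (u : ℕ) < k → i u ≤ i ⟨k - 1, by omega⟩ then
      (k : ℂ) /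
        ((Finset.univ.filter fun u : Fin m =>
            (u : ℕ) < k ∧ i u = i ⟨k - 1, by omega⟩).card : ℂ)
    else 0

lemma LP_coeff (n m : ℕ) (c : (Fin m → Fin n) → ℂ) (j : Fin m → Fin n) :
    LP n m c (fun u => Pi.single (j u) 1) = c j := by
  unfold LP
  rw [Finset.sum_eq_single j]
  · simp [Pi.single_apply]
  · intro b _ hb
    obtain ⟨u, hu⟩ := Function.ne_iff.mp hb
    have h0 : (∏ k : Fin m, (Pi.single (j k) (1:ℂ) : Fin n → ℂ) (b k)) = 0 := by
      apply Finset.prod_eq_zero (Finset.mem_univ u)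
      rw [Pi.single_apply, if_neg hu]
    rw [h0, mul_zero]
  · simp

lemma coeff_partialSym (n m k' : ℕ) (c : (Fin m → Fin n) → ℂ) (i : Fin m → Fin n) :
    coeff n m (partialSym n m k' (LP n m c)) i
      = (Nat.factorial k' : ℂ)⁻¹ * ∑ σ ∈ Finset.univ.filter
          (fun σ : Equiv.Perm (Fin m) => ∀ i : Fin m, k' ≤ (i : ℕ) → σ i = i),
          c (i ∘ σ) := by
  unfold coeff partialSym
  congr 1
  apply Finset.sum_congr rfl
  intro σ _
  exact LP_coeff n m c (i ∘ σ)

/-- `S_{k−1} L_P = 𝔄^k ⊙ S_k L_P` at the level of coefficients: for every `i`,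
`c_i(S_{k−1} L_P) = c_i(𝔄^k) · c_i(S_k L_P)`. -/
theorem partialSym_step_schur (n m k : ℕ) (hk : 1 ≤ k) (hkm : k ≤ m)
    (c : (Fin m → Fin n) → ℂ)
    (hc : ∀ j : Fin m → Fin n, ¬ Monotone j → c j = 0)
    (i : Fin m → Fin n) :
    coeff n m (partialSym n m (k - 1) (LP n m c)) i =
      Afrak n m k hk hkm i * coeff n m (partialSym n m k (LP n m c)) i := by
  obtain ⟨K, rfl⟩ : ∃ K, k = K + 1 := ⟨k - 1, by omega⟩
  set k := K + 1
  have hK : k - 1 = K := rfl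
  set p : Fin m := ⟨K, by omega⟩ with hp
  set G : ℕ → Finset (Equiv.Perm (Fin m)) := fun k' => Finset.univ.filter
      (fun σ : Equiv.Perm (Fin m) => ∀ i : Fin m, k' ≤ (i : ℕ) → σ i = i) with hG
  have memG : ∀ k' σ, σ ∈ G k' ↔ ∀ i : Fin m, k' ≤ (i : ℕ) → σ i = i := by
    intro k' σ; simp [hG]
  rw [coeff_partialSym, coeff_partialSym, hK]
  -- shorthand
  set f : Equiv.Perm (Fin m) → ℂ := fun σ => c (i ∘ σ) with hf
  -- the Afrak value
  unfold Afrak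
  have hpp : (⟨k - 1, by omega⟩ : Fin m) = p := rfl
  rw [hpp]
  by_cases hcond : ∀ u : Fin m, (u : ℕ) < k → i u ≤ i p
  · -- condition holds
    rw [if_pos hcond]
    set r := (Finset.univ.filter fun u : Fin m => (u : ℕ) < k ∧ i u = i p).card with hr
    have hrpos : 0 < r := by
      rw [hr]
      apply Finset.card_pos.mpr
      exact ⟨p, by simp [hp, k]⟩
    -- key combinatorial identity
    have hGKperm : ∀ σ ∈ G K, σ p = p := fun σ hσ => (memG K σ).mp hσ p (le_refl K)
    have small : ∀ (τ : Equiv.Perm (Fin m)), τ ∈ G K → ∀ a : Fin m, (a : ℕ) < K →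
        ((τ⁻¹ a : Fin m) : ℕ) < K := by
      intro τ hτ a ha
      by_contra h
      push_neg at h
      have := (memG K τ).mp hτ (τ⁻¹ a) h
      rw [show τ (τ⁻¹ a) = a from τ.apply_symm_apply a] at this
      omega
    have key : ∑ σ ∈ G k, f σ =
        ∑ a ∈ Finset.univ.filter (fun a : Fin m => (a : ℕ) < k),
          ∑ τ ∈ G K, f (Equiv.swap a p * τ) := by
      rw [← Finset.sum_product']
      apply Finset.sum_nbij' (fun σ => (σ p, Equiv.swap (σ p) p * σ))
        (fun x : Fin m × Equiv.Perm (Fin m) => Equiv.swap x.1 p * x.2)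
      · intro σ hσ
        have hσ' := (memG k σ).mp hσ
        rw [Finset.mem_product]
        constructor
        · simp only [Finset.mem_filter, Finset.mem_univ, true_and]
          by_contra h
          push_neg at h
          have := hσ' (σ p) h
          have hpp2 : σ p = p := σ.injective this
          rw [hpp2] at h
          have hpK : (p : ℕ) = K := rfl
          omega
        · rw [memG]
          intro j hj
          rcases Nat.lt_or_ge (j : ℕ) k with hjk | hjk
          · have hjK : (j : ℕ) = K := by omega
            have : j = p := Fin.ext hjK
            subst this
            simp [Equiv.Perm.mul_apply]
          · have h1 : σ j = j := hσ' j (by omega)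
            have h2 : σ p ≠ j := by
              intro h
              have : σ p = σ j := by rw [h1]; exact h
              have h4 := σ.injective this
              have hpK : (p : ℕ) = K := rfl
              have hjK : (j : ℕ) = (p : ℕ) := by rw [← h4]
              omega
            have h3 : (p : Fin m) ≠ j := by
              intro h; rw [← h] at hjk; simp [hp] at hjk; omega
            rw [Equiv.Perm.mul_apply, h1, Equiv.swap_apply_of_ne_of_ne (Ne.symm h2) (Ne.symm h3)]
      · intro x hx
        rw [Finset.mem_product] at hx
        obtain ⟨hx1, hx2⟩ := hx
        simp only [Finset.mem_filter, Finset.mem_univ, true_and] at hx1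
        have hx2' := (memG K x.2).mp hx2
        rw [memG]
        intro j hj
        have h1 : x.2 j = j := hx2' j (by omega)
        have h2 : x.1 ≠ j := by
          intro h; rw [h] at hx1; omega
        have h3 : (p : Fin m) ≠ j := by
          intro h
          rw [← h] at hj
          have hpK : (p : ℕ) = K := rfl
          omega
        rw [Equiv.Perm.mul_apply, h1, Equiv.swap_apply_of_ne_of_ne (Ne.symm h2) (Ne.symm h3)]
      · intro σ hσ
        simp [← mul_assoc, Equiv.swap_mul_self]
      · intro x hx
        rw [Finset.mem_product] at hx
        obtain ⟨hx1, hx2⟩ := hx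
        have hτp : x.2 p = p := (memG K x.2).mp hx2 p (le_refl K)
        have h1 : (Equiv.swap x.1 p * x.2) p = x.1 := by
          rw [Equiv.Perm.mul_apply, hτp, Equiv.swap_apply_right]
        rw [Prod.ext_iff]
        refine ⟨h1, ?_⟩
        rw [h1, ← mul_assoc, Equiv.swap_mul_self, one_mul]
      · intro σ hσ
        simp only [hf]
        congr 1
        ext u
        simp [← mul_assoc, Equiv.swap_mul_self]
    -- evaluate inner sums
    have inner : ∀ a : Fin m, (a : ℕ) < k →
        ∑ τ ∈ G K, f (Equiv.swap a p * τ)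
          = if i a = i p then ∑ τ ∈ G K, f τ else 0 := by
      intro a ha
      by_cases hia : i a = i p
      · rw [if_pos hia]
        apply Finset.sum_congr rfl
        intro τ _
        simp only [hf]
        congr 1
        ext u
        simp only [Function.comp_apply, Equiv.Perm.mul_apply]
        rcases eq_or_ne (τ u) a with h | h
        · rw [h, Equiv.swap_apply_left, ← hia]
        rcases eq_or_ne (τ u) p with h2 | h2
        · rw [h2, Equiv.swap_apply_right, hia]
        · rw [Equiv.swap_apply_of_ne_of_ne h h2]
      · rw [if_neg hia]
        apply Finset.sum_eq_zero
        intro τ hτ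
        have hap : a ≠ p := fun h => hia (by rw [h])
        have haK : (a : ℕ) < K := by
          have : (a : ℕ) ≠ K := fun h => hap (Fin.ext h)
          omega
        have hτp : τ p = p := (memG K τ).mp hτ p (le_refl K)
        apply hc
        intro hmon
        set v : Fin m := τ⁻¹ a with hv
        have hvK : (v : ℕ) < K := small τ hτ a haK
        have hvp : v ≤ p := by
          have hpK : (p : ℕ) = K := rfl
          rw [Fin.le_def]; omega
        have h1 : (i ∘ (Equiv.swap a p * τ)) v = i p := by
          simp [Equiv.Perm.mul_apply, hv, (show ∀ x, τ (τ⁻¹ x) = x from τ.apply_symm_apply)]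
        have h2 : (i ∘ (Equiv.swap a p * τ)) p = i a := by
          simp [Equiv.Perm.mul_apply, hτp]
        have := hmon hvp
        rw [h1, h2] at this
        have hlt : i a < i p := lt_of_le_of_ne (hcond a ha) hia
        exact absurd this (not_le_of_gt hlt)
    have key2 : ∑ σ ∈ G k, f σ = (r : ℂ) * ∑ τ ∈ G K, f τ := by
      rw [key, Finset.sum_congr rfl (fun a ha => inner a (by
        simpa using (Finset.mem_filter.mp ha).2))]
      rw [Finset.sum_ite, Finset.sum_const, Finset.sum_const_zero, add_zero,
        Finset.filter_filter]
      rw [hr]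
      have : (Finset.univ.filter fun u : Fin m => (u : ℕ) < k ∧ i u = i p)
          = (Finset.univ.filter fun a : Fin m => (a : ℕ) < k ∧ i a = i p) := rfl
      rw [this]
      simp [nsmul_eq_mul]
    rw [key2]
    have hrne : (r : ℂ) ≠ 0 := Nat.cast_ne_zero.mpr (by omega)
    have hfacK : ((Nat.factorial K : ℂ)) ≠ 0 := Nat.cast_ne_zero.mpr (Nat.factorial_ne_zero K)
    have hfack : ((Nat.factorial k : ℂ)) ≠ 0 := Nat.cast_ne_zero.mpr (Nat.factorial_ne_zero k)
    have hfactor : (Nat.factorial k : ℂ) = (k : ℂ) * (Nat.factorial K : ℂ) := by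
      rw [show k = K + 1 from rfl, Nat.factorial_succ]
      push_cast; ring
    have hkne : (k : ℂ) ≠ 0 := Nat.cast_ne_zero.mpr (by omega)
    rw [hfactor]
    simp only [hG]
    field_simp
    rfl
  · -- condition fails: both sides are zero
    rw [if_neg hcond, zero_mul]
    push_neg at hcond
    obtain ⟨u, hu_lt, hu⟩ := hcond
    have hu' : i p < i u := hu
    have hup : u ≠ p := by
      intro h; rw [h] at hu'; exact lt_irrefl _ hu'
    have huK : (u : ℕ) < K := by
      have : (u : ℕ) ≠ K := fun h => hup (Fin.ext h)
      omega
    have hzero : ∑ σ ∈ G K, f σ = 0 := by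
      apply Finset.sum_eq_zero
      intro σ hσ
      have hσ' := (memG K σ).mp hσ
      have hσp : σ p = p := hσ' p (le_refl K)
      apply hc
      intro hmon
      set v : Fin m := σ⁻¹ u with hv
      have hvK : (v : ℕ) < K := by
        by_contra h
        push_neg at h
        have h2 := hσ' v h
        have h3 : v = u := by
          have h4 : σ v = u := by rw [hv]; exact σ.apply_symm_apply u
          rw [h2] at h4; exact h4
        rw [h3] at h; omega
      have hvp : v ≤ p := by
        have hpK : (p : ℕ) = K := rfl
        rw [Fin.le_def]; omega
      have := hmon hvp
      simp only [Function.comp_apply, hv, (show ∀ x, σ (σ⁻¹ x) = x from σ.apply_symm_apply), hσp] at this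
      exact absurd this (not_le_of_gt hu')
    rw [hzero, mul_zero]
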